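/- Let 𝒩 > 0 be real, n ∈ ℕ, and set N := 𝒩 + 1/2 − n. Assume N > 0. Then for every X ∈ ℝ, ℋ_n^𝒩(X) = (N/𝒩)^{n/2} · H_n^N(X·√(N/𝒩)). -/

import Mathlib

open Real MeasureTheory Filter

/-- Relativistic Hermite polynomial via its Rodrigues formula. -/
noncomputable def relHermite (n : ℕ) (N : ℝ) (X : ℝ) : ℝ :=
  (-1 : ℝ)^n * (1 + X^2/N)^(N + (n : ℝ)) *
    iteratedDeriv n (fun t : ℝ => (1 + t^2/N)^(-N)) X

/-- Cariñena polynomial with positive parameter via its Rodrigues formula. -/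
noncomputable def carinenaPos (n : ℕ) (𝒩 : ℝ) (X : ℝ) : ℝ :=
  (-1 : ℝ)^n * (1 + X^2/𝒩)^(𝒩 + 1/2) *
    iteratedDeriv n (fun t : ℝ => (1 + t^2/𝒩)^((n : ℝ) - 𝒩 - 1/2)) X

/-- Cariñena polynomial with negative parameter 𝒩 = -ν via its Rodrigues formula. -/
noncomputable def carinenaNeg (n : ℕ) (ν : ℝ) (X : ℝ) : ℝ :=
  (-1 : ℝ)^n * (1 - X^2/ν)^((1:ℝ)/2 - ν) *
    iteratedDeriv n (fun t : ℝ => (1 - t^2/ν)^((n : ℝ) + ν - 1/2)) X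

/-- The constant α_{n,ν} = (2ν)_n / (2^n n! (ν+1/2)_n). -/
noncomputable def alphaConst (n : ℕ) (ν : ℝ) : ℝ :=
  (ascPochhammer ℝ n).eval (2*ν) /
    (2^n * (n.factorial : ℝ) * (ascPochhammer ℝ n).eval (ν + 1/2))

/-- Gegenbauer polynomial via its Rodrigues formula. -/
noncomputable def gegenbauer (n : ℕ) (ν : ℝ) (X : ℝ) : ℝ :=
  alphaConst n ν * (-1 : ℝ)^n * (1 - X^2)^((1:ℝ)/2 - ν) *
    iteratedDeriv n (fun t : ℝ => (1 - t^2)^((n : ℝ) + ν - 1/2)) X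

theorem carinena_pos_eq_relHermite (𝒩 : ℝ) (h𝒩 : 0 < 𝒩) (n : ℕ)
    (N : ℝ) (hN : N = 𝒩 + 1/2 - n) (hNpos : 0 < N) (X : ℝ) :
    carinenaPos n 𝒩 X = (N/𝒩)^((n : ℝ)/2) * relHermite n N (X * Real.sqrt (N/𝒩)) := by
  set c : ℝ := Real.sqrt (N/𝒩) with hc
  have hr : 0 < N/𝒩 := div_pos hNpos h𝒩
  have hc2 : c^2 = N/𝒩 := Real.sq_sqrt hr.le
  have hcpos : 0 < c := Real.sqrt_pos.mpr hr
  -- base equality : for any t, 1 + (t*c)^2/N = 1 + t^2/𝒩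
  have hbase : ∀ t : ℝ, 1 + (t*c)^2/N = 1 + t^2/𝒩 := by
    intro t
    have : (t*c)^2 = t^2 * (N/𝒩) := by rw [mul_pow, hc2]
    rw [this]
    field_simp
  -- the function in carinenaPos equals f ∘ (c * ·)
  have hfun : (fun t : ℝ => (1 + t^2/𝒩)^((n : ℝ) - 𝒩 - 1/2))
      = fun t : ℝ => (1 + (c*t)^2/N)^(-N) := by
    funext t
    rw [mul_comm c t, hbase t]
    congr 1
    rw [hN]; ring
  -- smoothness of f
  have hpos : ∀ s : ℝ, 0 < 1 + s^2/N := by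
    intro s
    positivity
  have hcd : ContDiff ℝ n (fun s : ℝ => (1 + s^2/N)^(-N)) := by
    apply ContDiff.rpow_const_of_ne
    · exact (contDiff_const.add ((contDiff_id.pow 2).div_const N))
    · intro s; exact (hpos s).ne'
  have hiter : iteratedDeriv n (fun t : ℝ => (1 + t^2/𝒩)^((n : ℝ) - 𝒩 - 1/2)) X
      = c ^ n * iteratedDeriv n (fun s : ℝ => (1 + s^2/N)^(-N)) (c * X) := by
    rw [hfun, iteratedDeriv_comp_const_mul hcd c]
  have hcn : (N/𝒩)^((n : ℝ)/2) = c ^ n := by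
    rw [hc, Real.sqrt_eq_rpow, ← Real.rpow_natCast ((N/𝒩)^((1:ℝ)/2)) n,
      ← Real.rpow_mul hr.le]
    congr 1
    ring
  unfold carinenaPos relHermite
  rw [hiter, hcn]
  have hb2 : 1 + (X*c)^2/N = 1 + X^2/𝒩 := hbase X
  rw [hb2]
  have hexp : 𝒩 + 1/2 = N + (n:ℝ) := by rw [hN]; ring
  rw [hexp, mul_comm c X]
  ring
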